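/- Let t, K be positive integers with K dividing t, let J be a real with 0 < J ≤ 1, and let X_0,…,X_{t−1} be {0,1}-valued random variables such that E[∏_{j ∈ I} X_j] ≤ J^{|I|} for every subset I ⊆ {0,…,t−1}. Let T = (T_0,…,T_{K−1}) and T' = (T'_0,…,T'_{K−1}) be two random rows that are independent of each other and of (X_0,…,X_{t−1}). Let Y := ∏_{j=0}^{K−1} X_{T_j} and Y' := ∏_{j=0}^{K−1} X_{T'_j}. Then E[ Y · Y' ] ≤ J^{2K} · ( 1 + K(1−J)/(J t) )^{K}. (Second-moment bound for two LSH rows.) -/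

import Mathlib

open MeasureTheory ProbabilityTheory

lemma lsh_int {Ω : Type*} [MeasurableSpace Ω] (P : Measure Ω) [IsFiniteMeasure P]
    {f : Ω → ℝ} (hf : Measurable f) (hb : ∀ ω, |f ω| ≤ 1) : Integrable f P := by
  refine ⟨hf.aestronglyMeasurable, HasFiniteIntegral.of_bounded (C := 1) ?_⟩
  filter_upwards with ω using (Real.norm_eq_abs _).le.trans (hb ω)

lemma lsh_exchange {K n : ℕ} (G : Fin K → Fin n → ℝ) :
    ∑ w : Fin K → Fin n, ∏ j, G j (w j) = ∏ j, ∑ b, G j b := by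
  rw [Finset.prod_univ_sum, Fintype.piFinset_univ]

lemma lsh_block_sum (t K m : ℕ) (htm : K * m = t) (j : ℕ) (hj : j < K) (y : ℝ) :
    (∑ a : Fin t, if j*m ≤ (a:ℕ) ∧ (a:ℕ) < (j+1)*m then y else 0) = m * y := by
  have hjt : (j+1)*m ≤ t := by
    calc (j+1)*m ≤ K*m := Nat.mul_le_mul_right m hj
    _ = t := htm
  rw [Fin.sum_univ_eq_sum_range (fun n => if j*m ≤ n ∧ n < (j+1)*m then y else 0) t,
    ← Finset.sum_filter]
  have hset : (Finset.range t).filter (fun n => j*m ≤ n ∧ n < (j+1)*m)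
      = Finset.Ico (j*m) ((j+1)*m) := by
    ext n
    simp only [Finset.mem_filter, Finset.mem_range, Finset.mem_Ico]
    omega
  rw [hset, Finset.sum_const, Nat.card_Ico]
  have : (j+1)*m - j*m = m := by rw [add_one_mul]; omega
  rw [this, nsmul_eq_mul]

lemma lsh_Q (t K m : ℕ) (htm : K * m = t) (hm : 0 < m) (J : ℝ) (j : ℕ) (hj : j < K) :
    (∑ a : Fin t, ∑ b : Fin t,
      ((if j*m ≤ (a:ℕ) ∧ (a:ℕ) < (j+1)*m then (m:ℝ)⁻¹ else 0)
       * (if j*m ≤ (b:ℕ) ∧ (b:ℕ) < (j+1)*m then (m:ℝ)⁻¹ else 0)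
       * (if a = b then J else J^2)))
    = J^2 + (J - J^2)/m := by
  have hm' : (m:ℝ) ≠ 0 := Nat.cast_ne_zero.mpr hm.ne'
  have key : ∀ a : Fin t, (∑ b : Fin t,
      ((if j*m ≤ (a:ℕ) ∧ (a:ℕ) < (j+1)*m then (m:ℝ)⁻¹ else 0)
       * (if j*m ≤ (b:ℕ) ∧ (b:ℕ) < (j+1)*m then (m:ℝ)⁻¹ else 0)
       * (if a = b then J else J^2)))
      = (if j*m ≤ (a:ℕ) ∧ (a:ℕ) < (j+1)*m then
          (m:ℝ)⁻¹ * J^2 + (m:ℝ)⁻¹ * ((m:ℝ)⁻¹ * (J - J^2)) else 0) := by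
    intro a
    have hsplit : ∀ b : Fin t,
        ((if j*m ≤ (a:ℕ) ∧ (a:ℕ) < (j+1)*m then (m:ℝ)⁻¹ else 0)
         * (if j*m ≤ (b:ℕ) ∧ (b:ℕ) < (j+1)*m then (m:ℝ)⁻¹ else 0)
         * (if a = b then J else J^2))
        = (if j*m ≤ (a:ℕ) ∧ (a:ℕ) < (j+1)*m then (m:ℝ)⁻¹ else 0)
          * ((if j*m ≤ (b:ℕ) ∧ (b:ℕ) < (j+1)*m then (m:ℝ)⁻¹ * J^2 else 0)
             + (if a = b then (if j*m ≤ (b:ℕ) ∧ (b:ℕ) < (j+1)*m then (m:ℝ)⁻¹ * (J-J^2) else 0) else 0)) := by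
      intro b
      split_ifs <;> ring
    simp only [hsplit, ← Finset.mul_sum]
    rw [Finset.sum_add_distrib, Finset.sum_ite_eq,
      lsh_block_sum t K m htm j hj ((m:ℝ)⁻¹ * J^2)]
    simp only [Finset.mem_univ, if_true]
    split_ifs with h
    · field_simp
    · ring
  simp only [key]
  rw [lsh_block_sum t K m htm j hj _]
  field_simp

theorem stmt10 {Ω : Type*} [MeasurableSpace Ω] (P : Measure Ω) [IsProbabilityMeasure P]
    (t K : ℕ) (ht : 0 < t) (hK : 0 < K) (hKt : K ∣ t) (J : ℝ) (hJ0 : 0 < J) (hJ1 : J ≤ 1)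
    (X : Fin t → Ω → ℝ) (hXmeas : ∀ i, Measurable (X i))
    (hX01 : ∀ i ω, X i ω = 0 ∨ X i ω = 1)
    (hmom : ∀ I : Finset (Fin t), ∫ ω, ∏ i ∈ I, X i ω ∂P ≤ J ^ I.card)
    (T T' : Fin K → Ω → Fin t)
    (hTmeas : ∀ j, Measurable (T j)) (hT'meas : ∀ j, Measurable (T' j))
    (hTTdist : ∀ v v' : Fin K → Fin t,
      P {ω | (∀ j, T j ω = v j) ∧ (∀ j, T' j ω = v' j)}
        = (∏ j : Fin K,
            (if (j : ℕ) * (t / K) ≤ (v j : ℕ) ∧ (v j : ℕ) < ((j : ℕ) + 1) * (t / K)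
              then ((K : ENNReal) / (t : ENNReal)) else 0))
          * (∏ j : Fin K,
            (if (j : ℕ) * (t / K) ≤ (v' j : ℕ) ∧ (v' j : ℕ) < ((j : ℕ) + 1) * (t / K)
              then ((K : ENNReal) / (t : ENNReal)) else 0)))
    (hindep : IndepFun (fun ω => (fun j => T j ω, fun j => T' j ω))
      (fun ω => fun i => X i ω) P) :
    ∫ ω, (∏ j : Fin K, X (T j ω) ω) * (∏ j : Fin K, X (T' j ω) ω) ∂P
      ≤ J ^ (2 * K) * (1 + (K : ℝ) * (1 - J) / (J * (t : ℝ))) ^ K := by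
  classical
  set m := t / K with hmdef
  have htm : K * m = t := Nat.mul_div_cancel' hKt
  have hm : 0 < m := Nat.div_pos (Nat.le_of_dvd ht hKt) hK
  have hmR : (m:ℝ) ≠ 0 := Nat.cast_ne_zero.mpr hm.ne'
  have hKR : (K:ℝ) ≠ 0 := Nat.cast_ne_zero.mpr hK.ne'
  have htR : (t:ℝ) = (K:ℝ) * (m:ℝ) := by exact_mod_cast htm.symm
  have hX0 : ∀ i ω, 0 ≤ X i ω := fun i ω => by rcases hX01 i ω with h | h <;> simp [h]
  have hX1 : ∀ i ω, X i ω ≤ 1 := fun i ω => by rcases hX01 i ω with h | h <;> simp [h]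
  -- abbreviation g
  set g : (Fin K → Fin t) → (Fin K → Fin t) → Ω → ℝ :=
    fun v v' ω => (∏ j, X (v j) ω) * ∏ j, X (v' j) ω with hgdef
  have hprod0 : ∀ (s : Finset (Fin t)) ω, 0 ≤ ∏ i ∈ s, X i ω :=
    fun s ω => Finset.prod_nonneg fun i _ => hX0 i ω
  have hprod1 : ∀ (s : Finset (Fin t)) ω, ∏ i ∈ s, X i ω ≤ 1 :=
    fun s ω => Finset.prod_le_one (fun i _ => hX0 i ω) (fun i _ => hX1 i ω)
  have hprodmeas : ∀ s : Finset (Fin t), Measurable (fun ω => ∏ i ∈ s, X i ω) :=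
    fun s => Finset.measurable_prod s fun i _ => hXmeas i
  have hprodint : ∀ s : Finset (Fin t), Integrable (fun ω => ∏ i ∈ s, X i ω) P := by
    intro s
    refine lsh_int P (hprodmeas s) fun ω => ?_
    rw [abs_of_nonneg (hprod0 s ω)]; exact hprod1 s ω
  have hg0 : ∀ v v' ω, 0 ≤ g v v' ω := fun v v' ω =>
    mul_nonneg (Finset.prod_nonneg fun j _ => hX0 _ ω) (Finset.prod_nonneg fun j _ => hX0 _ ω)
  have hg1 : ∀ v v' ω, g v v' ω ≤ 1 := fun v v' ω =>
    mul_le_one₀ (Finset.prod_le_one (fun j _ => hX0 _ ω) (fun j _ => hX1 _ ω))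
      (Finset.prod_nonneg fun j _ => hX0 _ ω)
      (Finset.prod_le_one (fun j _ => hX0 _ ω) (fun j _ => hX1 _ ω))
  have hgmeas : ∀ v v', Measurable (g v v') := fun v v' =>
    (Finset.measurable_prod _ fun j _ => hXmeas _).mul
      (Finset.measurable_prod _ fun j _ => hXmeas _)
  have hgint : ∀ v v', Integrable (g v v') P := by
    intro v v'
    refine lsh_int P (hgmeas v v') fun ω => ?_
    rw [abs_of_nonneg (hg0 v v' ω)]; exact hg1 v v' ω
  -- the events
  set A : (Fin K → Fin t) → (Fin K → Fin t) → Set Ω :=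
    fun v v' => {ω | (∀ j, T j ω = v j) ∧ (∀ j, T' j ω = v' j)} with hAdef
  have hAmeas : ∀ v v', MeasurableSet (A v v') := by
    intro v v'
    have : A v v' = (⋂ j, T j ⁻¹' {v j}) ∩ ⋂ j, T' j ⁻¹' {v' j} := by
      ext ω; simp [hAdef]
    rw [this]
    exact (MeasurableSet.iInter fun j => hTmeas j (measurableSet_singleton _)).inter
      (MeasurableSet.iInter fun j => hT'meas j (measurableSet_singleton _))
  -- indicators
  set ind : (Fin K → Fin t) → (Fin K → Fin t) → Ω → ℝ :=
    fun v v' ω => if ((∀ j, T j ω = v j) ∧ (∀ j, T' j ω = v' j)) then (1:ℝ) else 0 with hinddef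
  have hindmeas : ∀ v v', Measurable (ind v v') := by
    intro v v'
    exact Measurable.ite (hAmeas v v') measurable_const measurable_const
  have hFint : ∀ v v', Integrable (fun ω => ind v v' ω * g v v' ω) P := by
    intro v v'
    refine lsh_int P ((hindmeas v v').mul (hgmeas v v')) fun ω => ?_
    rw [abs_mul]
    have h1 : |ind v v' ω| ≤ 1 := by
      simp only [hinddef]; split_ifs <;> simp
    have h2 : |g v v' ω| ≤ 1 := by rw [abs_of_nonneg (hg0 v v' ω)]; exact hg1 v v' ω
    calc |ind v v' ω| * |g v v' ω| ≤ 1 * 1 :=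
      mul_le_mul h1 h2 (abs_nonneg _) zero_le_one
    _ = 1 := by ring
  -- Step A: pointwise expansion
  have hpt : ∀ ω, (∏ j : Fin K, X (T j ω) ω) * (∏ j : Fin K, X (T' j ω) ω)
      = ∑ v : Fin K → Fin t, ∑ v' : Fin K → Fin t, ind v v' ω * g v v' ω := by
    intro ω
    rw [Finset.sum_eq_single (fun j => T j ω)]
    · rw [Finset.sum_eq_single (fun j => T' j ω)]
      · simp [hinddef, hgdef]
      · intro b _ hb
        rw [hinddef]
        simp only
        rw [if_neg, zero_mul]
        rintro ⟨-, h2⟩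
        exact hb (funext fun j => (h2 j).symm)
      · intro h; exact absurd (Finset.mem_univ _) h
    · intro b _ hb
      apply Finset.sum_eq_zero
      intro v' _
      rw [hinddef]
      simp only
      rw [if_neg, zero_mul]
      rintro ⟨h1, -⟩
      exact hb (funext fun j => (h1 j).symm)
    · intro h; exact absurd (Finset.mem_univ _) h
  have hInt1 : ∫ ω, (∏ j : Fin K, X (T j ω) ω) * (∏ j : Fin K, X (T' j ω) ω) ∂P
      = ∑ v : Fin K → Fin t, ∑ v' : Fin K → Fin t,
          ∫ ω, ind v v' ω * g v v' ω ∂P := by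
    rw [integral_congr_ae (Filter.Eventually.of_forall hpt)]
    rw [integral_finset_sum Finset.univ (fun v _ => integrable_finset_sum _ (fun v' _ => hFint v v'))]
    exact Finset.sum_congr rfl fun v _ =>
      integral_finset_sum Finset.univ (fun v' _ => hFint v v')
  -- Step B: independence factorization
  have hBB : ∀ v v', ∫ ω, ind v v' ω * g v v' ω ∂P
      = (P (A v v')).toReal * ∫ ω, g v v' ω ∂P := by
    intro v v'
    set φ : ((Fin K → Fin t) × (Fin K → Fin t)) → ℝ := fun p => if p = (v, v') then 1 else 0 with hφdef
    set ψ : (Fin t → ℝ) → ℝ := fun x => (∏ j, x (v j)) * ∏ j, x (v' j) with hψdef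
    have hφm : Measurable φ := Measurable.ite (measurableSet_eq) measurable_const measurable_const
    have hψm : Measurable ψ := by
      apply Measurable.mul
      · exact Finset.measurable_prod _ fun j _ => measurable_pi_apply _
      · exact Finset.measurable_prod _ fun j _ => measurable_pi_apply _
    have hcomp : IndepFun (φ ∘ (fun ω => (fun j => T j ω, fun j => T' j ω)))
        (ψ ∘ (fun ω => fun i => X i ω)) P := hindep.comp hφm hψm
    have h1 : (φ ∘ (fun ω => (fun j => T j ω, fun j => T' j ω))) = ind v v' := by
      funext ω
      have hiff : ((fun j => T j ω, fun j => T' j ω)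
            = ((v, v') : (Fin K → Fin t) × (Fin K → Fin t)))
          ↔ ((∀ j, T j ω = v j) ∧ (∀ j, T' j ω = v' j)) := by
        simp [Prod.ext_iff, funext_iff]
      simp only [Function.comp_apply, hφdef, hinddef, hiff]
    have h2 : (ψ ∘ (fun ω => fun i => X i ω)) = g v v' := rfl
    have hmul := hcomp.integral_mul_eq_mul_integral
      (by rw [h1]; exact (hindmeas v v').aestronglyMeasurable)
      (by rw [h2]; exact (hgmeas v v').aestronglyMeasurable)
    rw [h1, h2] at hmul
    have hindint : ∫ ω, ind v v' ω ∂P = (P (A v v')).toReal := by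
      have : ind v v' = (A v v').indicator (1 : Ω → ℝ) := by
        funext ω
        rw [Set.indicator_apply]
        rfl
      rw [this, integral_indicator_one (hAmeas v v'), measureReal_def]
    calc ∫ ω, ind v v' ω * g v v' ω ∂P = ∫ ω, (ind v v' * g v v') ω ∂P := rfl
    _ = (∫ ω, ind v v' ω ∂P) * ∫ ω, g v v' ω ∂P := hmul
    _ = (P (A v v')).toReal * ∫ ω, g v v' ω ∂P := by rw [hindint]
  -- the per-coordinate weight
  set Q : Fin K → Fin t → Fin t → ℝ := fun j a b =>
    (if (j:ℕ)*m ≤ (a:ℕ) ∧ (a:ℕ) < ((j:ℕ)+1)*m then (m:ℝ)⁻¹ else 0)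
    * (if (j:ℕ)*m ≤ (b:ℕ) ∧ (b:ℕ) < ((j:ℕ)+1)*m then (m:ℝ)⁻¹ else 0)
    * (if a = b then J else J^2) with hQdef
  have hQ0 : ∀ j a b, 0 ≤ Q j a b := by
    intro j a b
    simp only [hQdef]
    apply mul_nonneg (mul_nonneg ?_ ?_) ?_ <;> split_ifs <;> positivity
  have hdiv : ∀ (j : Fin K) (a : Fin t),
      ((j:ℕ)*m ≤ (a:ℕ) ∧ (a:ℕ) < ((j:ℕ)+1)*m) → (a:ℕ)/m = (j:ℕ) :=
    fun j a h => Nat.div_eq_of_lt_le h.1 h.2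
  -- Step C: per-term bound
  have hterm : ∀ v v', (P (A v v')).toReal * ∫ ω, g v v' ω ∂P
      ≤ ∏ j, Q j (v j) (v' j) := by
    intro v v'
    by_cases hvalid : (∀ j : Fin K, (j:ℕ)*m ≤ (v j:ℕ) ∧ (v j:ℕ) < ((j:ℕ)+1)*m)
        ∧ (∀ j : Fin K, (j:ℕ)*m ≤ (v' j:ℕ) ∧ (v' j:ℕ) < ((j:ℕ)+1)*m)
    · obtain ⟨hv, hv'⟩ := hvalid
      have hPA : (P (A v v')).toReal = ((m:ℝ)⁻¹)^K * ((m:ℝ)⁻¹)^K := by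
        have e1 : (∏ j : Fin K, if (j:ℕ)*m ≤ (v j:ℕ) ∧ (v j:ℕ) < ((j:ℕ)+1)*m
              then ((K:ENNReal)/(t:ENNReal)) else 0) = ((K:ENNReal)/(t:ENNReal))^K := by
          calc (∏ j : Fin K, if (j:ℕ)*m ≤ (v j:ℕ) ∧ (v j:ℕ) < ((j:ℕ)+1)*m
              then ((K:ENNReal)/(t:ENNReal)) else 0)
              = ∏ _j : Fin K, ((K:ENNReal)/(t:ENNReal)) :=
            Finset.prod_congr rfl (fun j _ => if_pos (hv j))
          _ = ((K:ENNReal)/(t:ENNReal))^K := by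
            rw [Finset.prod_const, Finset.card_univ, Fintype.card_fin]
        have e2 : (∏ j : Fin K, if (j:ℕ)*m ≤ (v' j:ℕ) ∧ (v' j:ℕ) < ((j:ℕ)+1)*m
              then ((K:ENNReal)/(t:ENNReal)) else 0) = ((K:ENNReal)/(t:ENNReal))^K := by
          calc (∏ j : Fin K, if (j:ℕ)*m ≤ (v' j:ℕ) ∧ (v' j:ℕ) < ((j:ℕ)+1)*m
              then ((K:ENNReal)/(t:ENNReal)) else 0)
              = ∏ _j : Fin K, ((K:ENNReal)/(t:ENNReal)) :=
            Finset.prod_congr rfl (fun j _ => if_pos (hv' j))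
          _ = ((K:ENNReal)/(t:ENNReal))^K := by
            rw [Finset.prod_const, Finset.card_univ, Fintype.card_fin]
        rw [hTTdist v v', e1, e2]
        rw [ENNReal.toReal_mul, ENNReal.toReal_pow,
          ENNReal.toReal_div, ENNReal.toReal_natCast, ENNReal.toReal_natCast]
        have : (K:ℝ)/(t:ℝ) = (m:ℝ)⁻¹ := by
          rw [htR]; field_simp
        rw [this]
      have hQprod : ∏ j, Q j (v j) (v' j)
          = ((m:ℝ)⁻¹)^K * ((m:ℝ)⁻¹)^K * ∏ j, (if v j = v' j then J else J^2) := by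
        have hQj : ∀ j : Fin K, Q j (v j) (v' j)
            = (m:ℝ)⁻¹ * (m:ℝ)⁻¹ * (if v j = v' j then J else J^2) := by
          intro j
          simp only [hQdef]
          rw [if_pos (hv j), if_pos (hv' j)]
        calc (∏ j, Q j (v j) (v' j))
            = ∏ j : Fin K, ((m:ℝ)⁻¹ * (m:ℝ)⁻¹ * (if v j = v' j then J else J^2)) :=
          Finset.prod_congr rfl (fun j _ => hQj j)
        _ = ((m:ℝ)⁻¹)^K * ((m:ℝ)⁻¹)^K * ∏ j, (if v j = v' j then J else J^2) := by
          rw [Finset.prod_mul_distrib, Finset.prod_mul_distrib, Finset.prod_const,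
            Finset.card_univ, Fintype.card_fin]
      -- injectivity
      have hvinj : Function.Injective v := by
        intro j1 j2 h
        apply Fin.ext
        rw [← hdiv j1 (v j1) (hv j1), h, hdiv j2 (v j2) (hv j2)]
      have hv'inj : Function.Injective v' := by
        intro j1 j2 h
        apply Fin.ext
        rw [← hdiv j1 (v' j1) (hv' j1), h, hdiv j2 (v' j2) (hv' j2)]
      set Av := Finset.image v Finset.univ with hAv
      set Bv := Finset.image v' Finset.univ with hBv
      set c := (Finset.univ.filter (fun j => v j = v' j)).card with hc
      have hunion_card : (Av ∪ Bv).card + (Av ∩ Bv).card = K + K := by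
        rw [Finset.card_union_add_card_inter, hAv, hBv,
          Finset.card_image_of_injective _ hvinj, Finset.card_image_of_injective _ hv'inj,
          Finset.card_univ, Fintype.card_fin]
      have hint_le : (Av ∩ Bv).card ≤ c := by
        have hsub : Av ∩ Bv ⊆ Finset.image v (Finset.univ.filter fun j => v j = v' j) := by
          intro i hi
          rw [Finset.mem_inter] at hi
          obtain ⟨j1, -, hj1⟩ := Finset.mem_image.mp hi.1
          obtain ⟨j2, -, hj2⟩ := Finset.mem_image.mp hi.2
          have hje : j1 = j2 := by
            apply Fin.ext
            rw [← hdiv j1 (v j1) (hv j1), hj1, ← hj2, hdiv j2 (v' j2) (hv' j2)]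
          refine Finset.mem_image.mpr ⟨j1, Finset.mem_filter.mpr ⟨Finset.mem_univ _, ?_⟩, hj1⟩
          rw [hj1, hje, hj2]
        calc (Av ∩ Bv).card ≤ _ := Finset.card_le_card hsub
        _ ≤ c := Finset.card_image_le
      have hcardU : 2*K - c ≤ (Av ∪ Bv).card := by omega
      have hptg : ∀ ω, g v v' ω ≤ ∏ i ∈ Av ∪ Bv, X i ω := by
        intro ω
        have h1 : ∏ i ∈ Av, X i ω = ∏ j : Fin K, X (v j) ω :=
          Finset.prod_image (g := v) (f := fun i => X i ω) (fun a _ b _ h => hvinj h)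
        have h2 : ∏ i ∈ Bv, X i ω = ∏ j : Fin K, X (v' j) ω :=
          Finset.prod_image (g := v') (f := fun i => X i ω) (fun a _ b _ h => hv'inj h)
        calc g v v' ω = (∏ i ∈ Av, X i ω) * ∏ i ∈ Bv, X i ω := by
              simp only [hgdef]; rw [h1, h2]
        _ = (∏ i ∈ Av ∪ Bv, X i ω) * ∏ i ∈ Av ∩ Bv, X i ω :=
          (Finset.prod_union_inter).symm
        _ ≤ ∏ i ∈ Av ∪ Bv, X i ω :=
          mul_le_of_le_one_right (hprod0 _ ω) (hprod1 _ ω)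
      have hIub : ∫ ω, g v v' ω ∂P ≤ J ^ (Av ∪ Bv).card :=
        le_trans (integral_mono (hgint v v') (hprodint _) hptg) (hmom _)
      have hJle : J ^ (Av ∪ Bv).card ≤ J ^ (2*K - c) :=
        pow_le_pow_of_le_one hJ0.le hJ1 hcardU
      have hprod_ite : (∏ j, (if v j = v' j then J else J^2)) = J ^ (2*K - c) := by
        rw [Finset.prod_ite, Finset.prod_const, Finset.prod_const, ← pow_mul, ← pow_add]
        congr 1
        have h3 := Finset.card_filter_add_card_filter_not
          (s := (Finset.univ : Finset (Fin K))) (p := fun j => v j = v' j)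
        rw [Finset.card_univ, Fintype.card_fin] at h3
        omega
      rw [hPA, hQprod, hprod_ite]
      apply mul_le_mul_of_nonneg_left (hIub.trans hJle)
      positivity
    · -- invalid: probability is zero
      have hPA : P (A v v') = 0 := by
        rw [hTTdist v v']
        rw [not_and_or] at hvalid
        rcases hvalid with h | h
        · obtain ⟨j, hj⟩ := not_forall.mp h
          have hzero : (if (j:ℕ)*m ≤ (v j:ℕ) ∧ (v j:ℕ) < ((j:ℕ)+1)*m
              then ((K:ENNReal)/(t:ENNReal)) else 0) = 0 := if_neg hj
          rw [Finset.prod_eq_zero (Finset.mem_univ j) hzero, zero_mul]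
        · obtain ⟨j, hj⟩ := not_forall.mp h
          have hzero : (if (j:ℕ)*m ≤ (v' j:ℕ) ∧ (v' j:ℕ) < ((j:ℕ)+1)*m
              then ((K:ENNReal)/(t:ENNReal)) else 0) = 0 := if_neg hj
          have hzp : (∏ j : Fin K, if (j:ℕ)*m ≤ (v' j:ℕ) ∧ (v' j:ℕ) < ((j:ℕ)+1)*m
              then ((K:ENNReal)/(t:ENNReal)) else 0) = 0 :=
            Finset.prod_eq_zero (Finset.mem_univ j) hzero
          rw [hzp, mul_zero]
      rw [hPA]
      simp only [ENNReal.toReal_zero, zero_mul]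
      exact Finset.prod_nonneg fun j _ => hQ0 j (v j) (v' j)
  -- Step D: assemble
  have hsum_le : ∑ v : Fin K → Fin t, ∑ v' : Fin K → Fin t,
      (P (A v v')).toReal * ∫ ω, g v v' ω ∂P
      ≤ ∑ v : Fin K → Fin t, ∑ v' : Fin K → Fin t, ∏ j, Q j (v j) (v' j) :=
    Finset.sum_le_sum fun v _ => Finset.sum_le_sum fun v' _ => hterm v v'
  have hfact : ∑ v : Fin K → Fin t, ∑ v' : Fin K → Fin t, ∏ j, Q j (v j) (v' j)
      = ∏ j : Fin K, ∑ a : Fin t, ∑ b : Fin t, Q j a b := by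
    have h1 : ∀ v : Fin K → Fin t, ∑ v' : Fin K → Fin t, ∏ j, Q j (v j) (v' j)
        = ∏ j, ∑ b, Q j (v j) b := fun v => lsh_exchange (fun j b => Q j (v j) b)
    rw [Finset.sum_congr rfl (fun v _ => h1 v)]
    exact lsh_exchange (fun j a => ∑ b, Q j a b)
  have hQsum : ∀ j : Fin K, (∑ a : Fin t, ∑ b : Fin t, Q j a b) = J^2 + (J - J^2)/m := by
    intro j
    simp only [hQdef]
    exact lsh_Q t K m htm hm J (j:ℕ) j.isLt
  have hfinal : (∏ j : Fin K, ∑ a : Fin t, ∑ b : Fin t, Q j a b)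
      = J ^ (2*K) * (1 + (K : ℝ) * (1 - J) / (J * (t : ℝ))) ^ K := by
    have e : (∏ j : Fin K, ∑ a : Fin t, ∑ b : Fin t, Q j a b)
        = ∏ _j : Fin K, (J^2 + (J - J^2)/m) :=
      Finset.prod_congr rfl (fun j _ => hQsum j)
    rw [e, Finset.prod_const, Finset.card_univ, Fintype.card_fin]
    rw [pow_mul, ← mul_pow]
    congr 1
    rw [htR]
    have hJ' : J ≠ 0 := hJ0.ne'
    field_simp
  calc ∫ ω, (∏ j : Fin K, X (T j ω) ω) * (∏ j : Fin K, X (T' j ω) ω) ∂P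
      = ∑ v : Fin K → Fin t, ∑ v' : Fin K → Fin t, ∫ ω, ind v v' ω * g v v' ω ∂P := hInt1
    _ = ∑ v : Fin K → Fin t, ∑ v' : Fin K → Fin t,
          (P (A v v')).toReal * ∫ ω, g v v' ω ∂P := by
        exact Finset.sum_congr rfl fun v _ => Finset.sum_congr rfl fun v' _ => hBB v v'
    _ ≤ ∑ v : Fin K → Fin t, ∑ v' : Fin K → Fin t, ∏ j, Q j (v j) (v' j) := hsum_le
    _ = ∏ j : Fin K, ∑ a : Fin t, ∑ b : Fin t, Q j a b := hfact
    _ = J ^ (2*K) * (1 + (K : ℝ) * (1 - J) / (J * (t : ℝ))) ^ K := hfinal
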